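/- Let J = [0,∞) and let f : J → ℝ be differentiable on the interior of J with f' integrable on [u,v], where u, v ∈ J and 0 < u < v. Let q ≥ 1 and s ∈ (0,1]. If |f'|^q is s-convex in the second sense on [u,v], then for every x ∈ [u,v]: |((v-x)(v·f(v) - u·f(x)) + (x-u)(v·f(x) - u·f(u)))/(v-u)² - (1/(v-u))·∫_u^v f(μ) dμ| ≤ ((v-x)²/(v-u)²)·A(u,v)^{1-1/q}·(1/((s+1)(s+2)))^{1/q}·(((s+1)u+v)·|f'(x)|^q + ((s+1)v+u)·|f'(v)|^q)^{1/q} + ((x-u)²/(v-u)²)·A(u,v)^{1-1/q}·(1/((s+1)(s+2)))^{1/q}·(((s+1)v+u)·|f'(x)|^q + ((s+1)u+v)·|f'(u)|^q)^{1/q}. -/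

import Mathlib

open MeasureTheory intervalIntegral Set

lemma intW (c d : ℝ) : ∫ t in (0:ℝ)..1, (t*c+(1-t)*d) = (c+d)/2 := by
  have : (fun t : ℝ => t*c+(1-t)*d) = fun t : ℝ => (c-d)*t + d := by ext t; ring
  rw [this]
  have h1 : IntervalIntegrable (fun t : ℝ => (c-d)*t) volume 0 1 :=
    (by continuity : Continuous fun t:ℝ => (c-d)*t).intervalIntegrable 0 1
  rw [intervalIntegral.integral_add h1 intervalIntegrable_const,
    intervalIntegral.integral_const_mul]
  simp [integral_id]
  ring

lemma contRpow {s : ℝ} (hs : 0 < s) : Continuous (fun t : ℝ => t ^ s) := by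
  rw [continuous_iff_continuousAt]
  intro t
  exact Real.continuousAt_rpow_const t s (Or.inr hs.le)

lemma intRpow {s : ℝ} (hs : 0 < s) : ∫ t in (0:ℝ)..1, t ^ s = 1/(s+1) := by
  rw [integral_rpow (Or.inl (by linarith))]
  rw [Real.one_rpow, Real.zero_rpow (by linarith)]
  norm_num

lemma intWRpow {s : ℝ} (hs : 0 < s) (c d : ℝ) :
    ∫ t in (0:ℝ)..1, (t*c+(1-t)*d) * t ^ s = ((s+1)*c+d)/((s+1)*(s+2)) := by
  have hcong : ∀ t ∈ Set.uIcc (0:ℝ) 1,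
      (t*c+(1-t)*d) * t ^ s = (c-d) * t^(s+1) + d * t^s := by
    intro t ht
    rw [Set.uIcc_of_le (by norm_num : (0:ℝ) ≤ 1)] at ht
    rcases eq_or_lt_of_le ht.1 with h0 | h0
    · rw [← h0, Real.zero_rpow (by linarith), Real.zero_rpow (by linarith)]; ring
    · rw [Real.rpow_add h0, Real.rpow_one]; ring
  rw [intervalIntegral.integral_congr hcong]
  have h1 : IntervalIntegrable (fun t : ℝ => (c-d) * t^(s+1)) volume 0 1 :=
    (continuous_const.mul (contRpow (by linarith))).intervalIntegrable 0 1
  have h2 : IntervalIntegrable (fun t : ℝ => d * t^s) volume 0 1 :=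
    (continuous_const.mul (contRpow hs)).intervalIntegrable 0 1
  rw [intervalIntegral.integral_add h1 h2, intervalIntegral.integral_const_mul,
    intervalIntegral.integral_const_mul, intRpow hs, intRpow (by linarith : (0:ℝ) < s+1)]
  have : s + 1 + 1 = s + 2 := by ring
  rw [this]
  field_simp
  ring

lemma intWRpow' {s : ℝ} (hs : 0 < s) (c d : ℝ) :
    ∫ t in (0:ℝ)..1, (t*c+(1-t)*d) * (1-t) ^ s = ((s+1)*d+c)/((s+1)*(s+2)) := by
  have := intervalIntegral.integral_comp_sub_left (a := (0:ℝ)) (b := 1)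
    (fun y => (y*d+(1-y)*c) * y ^ s) 1
  simp only [sub_zero, sub_self] at this
  have heq : (fun t : ℝ => (t*c+(1-t)*d) * (1-t) ^ s)
      = fun t : ℝ => ((1-t)*d+(1-(1-t))*c) * (1-t) ^ s := by ext t; ring_nf
  rw [heq, this, intWRpow hs d c]

lemma intWH {s : ℝ} (hs : 0 < s) (c d A B : ℝ) :
    ∫ t in (0:ℝ)..1, (t*c+(1-t)*d) * (t^s*A + (1-t)^s*B)
      = (((s+1)*c+d)*A + ((s+1)*d+c)*B)/((s+1)*(s+2)) := by
  have contw : Continuous (fun t : ℝ => t*c+(1-t)*d) := by continuity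
  have cont1 : Continuous (fun t : ℝ => (t*c+(1-t)*d) * t^s * A) :=
    (contw.mul (contRpow hs)).mul continuous_const
  have cont2 : Continuous (fun t : ℝ => (t*c+(1-t)*d) * (1-t)^s * B) :=
    (contw.mul ((contRpow hs).comp (by continuity))).mul continuous_const
  have heq : (fun t : ℝ => (t*c+(1-t)*d) * (t^s*A + (1-t)^s*B))
      = fun t : ℝ => (t*c+(1-t)*d) * t^s * A + (t*c+(1-t)*d) * (1-t)^s * B := by
    ext t; ring
  rw [heq, intervalIntegral.integral_add (cont1.intervalIntegrable 0 1)
    (cont2.intervalIntegrable 0 1), intervalIntegral.integral_mul_const,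
    intervalIntegral.integral_mul_const, intWRpow hs c d, intWRpow' hs c d]
  have h1 : (s+1) ≠ 0 := by linarith
  have h2 : (s+2) ≠ 0 := by linarith
  field_simp


lemma key (g : ℝ → ℝ) (c d q s A B : ℝ) (hc : 0 < c) (hd : 0 < d) (hq : 1 ≤ q) (hs0 : 0 < s)
    (hA : 0 ≤ A) (hB : 0 ≤ B)
    (hmeas : AEStronglyMeasurable g (volume.restrict (Set.Ioc (0:ℝ) 1)))
    (hg : ∀ t ∈ Set.Icc (0:ℝ) 1, |g t| ^ q ≤ t ^ s * A + (1-t) ^ s * B)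
    (intW : (∫ t in (0:ℝ)..1, (t*c+(1-t)*d)) = (c+d)/2)
    (intWH : (∫ t in (0:ℝ)..1, (t*c+(1-t)*d) * (t^s*A + (1-t)^s*B))
      = (((s+1)*c+d)*A + ((s+1)*d+c)*B)/((s+1)*(s+2))) :
    |∫ t in (0:ℝ)..1, (t*c+(1-t)*d) * g t|
      ≤ ((c+d)/2) ^ (1 - 1/q) * (1/((s+1)*(s+2))) ^ (1/q)
        * (((s+1)*c+d)*A + ((s+1)*d+c)*B) ^ (1/q) := by
  have hq0 : 0 < q := lt_of_lt_of_le one_pos hq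
  set w : ℝ → ℝ := fun t => t*c+(1-t)*d with hwdef
  set h : ℝ → ℝ := fun t => t^s*A + (1-t)^s*B with hhdef
  have contw : Continuous w := by unfold w; continuity
  have conth : Continuous h := by
    unfold h
    exact ((contRpow hs0).mul continuous_const).add
      (((contRpow hs0).comp (by continuity)).mul continuous_const)
  have hw0 : ∀ t ∈ Set.Icc (0:ℝ) 1, 0 < w t := by
    intro t ht
    have h1 := ht.1; have h2 := ht.2
    show 0 < t*c+(1-t)*d
    rcases le_or_gt d c with h' | h' <;> nlinarith
  have hwle : ∀ t ∈ Set.Icc (0:ℝ) 1, w t ≤ c + d := by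
    intro t ht
    have h1 := ht.1; have h2 := ht.2
    show t*c+(1-t)*d ≤ c + d
    nlinarith
  have hh0 : ∀ t ∈ Set.Icc (0:ℝ) 1, 0 ≤ h t := by
    intro t ht
    have := Real.rpow_nonneg ht.1 s
    have := Real.rpow_nonneg (by linarith [ht.2] : (0:ℝ) ≤ 1 - t) s
    have : (0:ℝ) ≤ t^s*A := by positivity
    have : (0:ℝ) ≤ (1-t)^s*B := by positivity
    show (0:ℝ) ≤ t^s*A + (1-t)^s*B
    linarith
  have hhle : ∀ t ∈ Set.Icc (0:ℝ) 1, h t ≤ A + B := by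
    intro t ht
    have h1 : t^s ≤ 1 := Real.rpow_le_one ht.1 ht.2 hs0.le
    have h2 : (1-t)^s ≤ 1 :=
      Real.rpow_le_one (by linarith [ht.2]) (by linarith [ht.1]) hs0.le
    have e1 : t^s*A ≤ A := by nlinarith [Real.rpow_nonneg ht.1 s]
    have e2 : (1-t)^s*B ≤ B := by
      nlinarith [Real.rpow_nonneg (by linarith [ht.2] : (0:ℝ) ≤ 1-t) s]
    show t^s*A + (1-t)^s*B ≤ A + B
    linarith
  have hgabs : ∀ t ∈ Set.Icc (0:ℝ) 1, |g t| ≤ (h t) ^ (1/q) := by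
    intro t ht
    have e1 : |g t| = (|g t| ^ q) ^ (1/q) := by
      rw [← Real.rpow_mul (abs_nonneg _), mul_one_div_cancel hq0.ne', Real.rpow_one]
    rw [e1]
    exact Real.rpow_le_rpow (Real.rpow_nonneg (abs_nonneg _) q) (hg t ht) (by positivity)
  have hgbd : ∀ t ∈ Set.Icc (0:ℝ) 1, |g t| ≤ (A + B) ^ (1/q) := by
    intro t ht
    exact (hgabs t ht).trans (Real.rpow_le_rpow (hh0 t ht) (hhle t ht) (by positivity))
  -- integrability of g
  have gi : IntervalIntegrable g volume 0 1 := by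
    rw [intervalIntegrable_iff_integrableOn_Ioc_of_le (by norm_num)]
    refine Integrable.mono' ((integrableOn_const_iff (C := (A+B)^(1/q))).2 (Or.inr measure_Ioc_lt_top)) hmeas ?_
    exact (ae_restrict_iff' measurableSet_Ioc).2 (Filter.Eventually.of_forall
      fun t ht => hgbd t ⟨ht.1.le, ht.2⟩)
  -- step 1 : pull abs inside
  have step1 : |∫ t in (0:ℝ)..1, w t * g t| ≤ ∫ t in (0:ℝ)..1, w t * |g t| := by
    refine (intervalIntegral.abs_integral_le_integral_abs (by norm_num)).trans_eq ?_
    refine intervalIntegral.integral_congr ?_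
    intro t ht
    rw [Set.uIcc_of_le (by norm_num : (0:ℝ) ≤ 1)] at ht
    show |w t * g t| = w t * |g t|
    rw [abs_mul, abs_of_nonneg (hw0 t ht).le]
  refine step1.trans ?_
  have hD : (0:ℝ) < (s+1)*(s+2) := by nlinarith
  have hK : (0:ℝ) ≤ ((s+1)*c+d)*A + ((s+1)*d+c)*B := by
    have : (0:ℝ) < (s+1)*c+d := by nlinarith
    have : (0:ℝ) < (s+1)*d+c := by nlinarith
    positivity
  rcases eq_or_lt_of_le hq with hq1 | hq1
  · -- case q = 1
    subst hq1
    simp only [ne_eq, one_ne_zero, not_false_iff, div_self, sub_self, Real.rpow_zero,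
      Real.rpow_one, one_mul, div_one]
    have mono : (∫ t in (0:ℝ)..1, w t * |g t|) ≤ ∫ t in (0:ℝ)..1, w t * h t := by
      refine intervalIntegral.integral_mono_on (by norm_num) ?_ ?_ ?_
      · exact gi.abs.continuousOn_mul contw.continuousOn
      · exact (contw.mul conth).intervalIntegrable 0 1
      · intro t ht
        have := hg t ht
        rw [Real.rpow_one] at this
        exact mul_le_mul_of_nonneg_left this (hw0 t ht).le
    refine mono.trans ?_
    rw [intWH]
    exact le_of_eq (by ring)
  · -- case 1 < q
    set p := q/(q-1) with hpdef
    have hpq : p.HolderConjugate q := (Real.HolderConjugate.conjExponent hq1).symm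
    have hp0 : 0 < p := hpq.pos
    have hinvp : 1/p = 1 - 1/q := by
      have := hpq.inv_add_inv_eq_one
      rw [one_div, one_div]
      linarith
    rw [intervalIntegral.integral_of_le (by norm_num : (0:ℝ) ≤ 1)]
    set ν := volume.restrict (Set.Ioc (0:ℝ) 1) with hν
    haveI : IsFiniteMeasure ν :=
      ⟨by rw [hν, Measure.restrict_apply_univ]; exact measure_Ioc_lt_top⟩
    set F : ℝ → ℝ := fun t => (w t)^(1/p) with hF
    set G : ℝ → ℝ := fun t => (w t)^(1/q) * |g t| with hG
    have contF : Continuous F := (contRpow (by positivity)).comp contw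
    have contwq : Continuous (fun t => (w t)^(1/q)) := (contRpow (by positivity)).comp contw
    have hsub : ∀ t, t ∈ Set.Ioc (0:ℝ) 1 → t ∈ Set.Icc (0:ℝ) 1 := fun t ht => ⟨ht.1.le, ht.2⟩
    have hF0 : 0 ≤ᵐ[ν] F :=
      (ae_restrict_iff' measurableSet_Ioc).2 (Filter.Eventually.of_forall fun t ht =>
        Real.rpow_nonneg (hw0 t (hsub t ht)).le _)
    have hG0 : 0 ≤ᵐ[ν] G :=
      (ae_restrict_iff' measurableSet_Ioc).2 (Filter.Eventually.of_forall fun t ht =>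
        mul_nonneg (Real.rpow_nonneg (hw0 t (hsub t ht)).le _) (abs_nonneg _))
    have hFmem : MemLp F (ENNReal.ofReal p) ν := by
      refine MemLp.of_bound contF.aestronglyMeasurable ((c+d)^(1/p)) ?_
      refine (ae_restrict_iff' measurableSet_Ioc).2 (Filter.Eventually.of_forall fun t ht => ?_)
      rw [Real.norm_eq_abs, abs_of_nonneg (Real.rpow_nonneg (hw0 t (hsub t ht)).le _)]
      exact Real.rpow_le_rpow (hw0 t (hsub t ht)).le (hwle t (hsub t ht)) (by positivity)
    have hGmem : MemLp G (ENNReal.ofReal q) ν := by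
      refine MemLp.of_bound (contwq.aestronglyMeasurable.mul hmeas.norm)
        ((c+d)^(1/q) * (A+B)^(1/q)) ?_
      refine (ae_restrict_iff' measurableSet_Ioc).2 (Filter.Eventually.of_forall fun t ht => ?_)
      have ht' := hsub t ht
      rw [Real.norm_eq_abs, abs_mul, abs_of_nonneg (Real.rpow_nonneg (hw0 t ht').le _), abs_abs]
      refine mul_le_mul (Real.rpow_le_rpow (hw0 t ht').le (hwle t ht') (by positivity))
        (hgbd t ht') (abs_nonneg _) (by positivity)
    have step2 : (∫ t in Set.Ioc (0:ℝ) 1, w t * |g t|) = ∫ t, F t * G t ∂ν := by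
      rw [hν]
      refine (setIntegral_congr_fun measurableSet_Ioc fun t ht => ?_).symm
      have ht' := hsub t ht
      show F t * G t = w t * |g t|
      rw [hF, hG]
      show (w t)^(1/p) * ((w t)^(1/q) * |g t|) = w t * |g t|
      rw [← mul_assoc, ← Real.rpow_add (hw0 t ht'), one_div, one_div,
        hpq.inv_add_inv_eq_one, Real.rpow_one]
    have holder := integral_mul_le_Lp_mul_Lq_of_nonneg hpq hF0 hG0 hFmem hGmem
    have eqFp : (∫ t, F t ^ p ∂ν) = (c+d)/2 := by
      rw [hν]
      have : (∫ t in Set.Ioc (0:ℝ) 1, F t ^ p) = ∫ t in Set.Ioc (0:ℝ) 1, w t := by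
        refine setIntegral_congr_fun measurableSet_Ioc fun t ht => ?_
        show (w t ^ (1/p)) ^ p = w t
        rw [← Real.rpow_mul (hw0 t (hsub t ht)).le, one_div_mul_cancel hp0.ne', Real.rpow_one]
      rw [this, ← intervalIntegral.integral_of_le (by norm_num : (0:ℝ) ≤ 1), intW]
    have leGq : (∫ t, G t ^ q ∂ν) ≤ (((s+1)*c+d)*A + ((s+1)*d+c)*B)/((s+1)*(s+2)) := by
      rw [hν]
      have e1 : (∫ t in Set.Ioc (0:ℝ) 1, G t ^ q) = ∫ t in Set.Ioc (0:ℝ) 1, w t * |g t| ^ q := by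
        refine setIntegral_congr_fun measurableSet_Ioc fun t ht => ?_
        have ht' := hsub t ht
        show ((w t)^(1/q) * |g t|) ^ q = w t * |g t| ^ q
        rw [Real.mul_rpow (Real.rpow_nonneg (hw0 t ht').le _) (abs_nonneg _),
          ← Real.rpow_mul (hw0 t ht').le, one_div_mul_cancel hq0.ne', Real.rpow_one]
      rw [e1]
      have e2 : (∫ t in Set.Ioc (0:ℝ) 1, w t * |g t| ^ q)
          ≤ ∫ t in Set.Ioc (0:ℝ) 1, w t * h t := by
        refine setIntegral_mono_on ?_ ?_ measurableSet_Ioc ?_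
        · refine Integrable.mono' ((integrableOn_const_iff (C := (c+d)*(A+B))).2
            (Or.inr measure_Ioc_lt_top))
            (contw.aestronglyMeasurable.mul
              ((hmeas.norm.aemeasurable.pow_const q).aestronglyMeasurable)) ?_
          refine (ae_restrict_iff' measurableSet_Ioc).2
            (Filter.Eventually.of_forall fun t ht => ?_)
          have ht' := hsub t ht
          have h1 : |g t| ^ q ≤ h t := hg t ht'
          have h2 : (0:ℝ) ≤ |g t| ^ q := Real.rpow_nonneg (abs_nonneg _) _
          rw [Real.norm_eq_abs, abs_mul, abs_of_nonneg (hw0 t ht').le, abs_of_nonneg h2]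
          exact mul_le_mul (hwle t ht') (h1.trans (hhle t ht')) h2 (by positivity)
        · exact ((contw.mul conth).integrableOn_Ioc)
        · intro t ht
          exact mul_le_mul_of_nonneg_left (hg t (hsub t ht)) (hw0 t (hsub t ht)).le
      refine e2.trans_eq ?_
      rw [← intervalIntegral.integral_of_le (by norm_num : (0:ℝ) ≤ 1), intWH]
    rw [step2]
    refine holder.trans ?_
    rw [eqFp]
    have hGq0 : (0:ℝ) ≤ ∫ t, G t ^ q ∂ν := by
      refine integral_nonneg_of_ae ?_
      filter_upwards [hG0] with t ht
      exact Real.rpow_nonneg ht _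
    have : (∫ t, G t ^ q ∂ν) ^ (1/q)
        ≤ ((((s+1)*c+d)*A + ((s+1)*d+c)*B)/((s+1)*(s+2))) ^ (1/q) :=
      Real.rpow_le_rpow hGq0 leGq (by positivity)
    refine (mul_le_mul_of_nonneg_left this (by positivity : (0:ℝ) ≤ ((c+d)/2)^(1/p))).trans_eq ?_
    rw [hinvp, div_eq_mul_inv (((s+1)*c+d)*A + ((s+1)*d+c)*B),
      mul_comm (((s+1)*c+d)*A + ((s+1)*d+c)*B),
      Real.mul_rpow (by positivity) hK, ← one_div]
    ring

lemma ibp (f f' : ℝ → ℝ) (α β a b : ℝ)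
    (hd : ∀ μ ∈ Set.uIcc a b, HasDerivAt f (f' μ) μ)
    (hi : IntervalIntegrable f' volume a b) :
    ∫ μ in a..b, (α*μ+β) * f' μ
      = (α*b+β)*f b - (α*a+β)*f a - α * ∫ μ in a..b, f μ := by
  have hU : ∀ μ ∈ Set.uIcc a b, HasDerivAt (fun μ : ℝ => α*μ+β) α μ := by
    intro μ _
    simpa using ((hasDerivAt_id μ).const_mul α).add_const β
  have := intervalIntegral.integral_mul_deriv_eq_deriv_mul hU hd
    (intervalIntegrable_const) hi
  rw [this, intervalIntegral.integral_const_mul]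

lemma identity (f f' : ℝ → ℝ) (u v x : ℝ) (hu : 0 < u) (huv : u < v)
    (hx : x ∈ Set.Icc u v)
    (hderiv : ∀ y ∈ interior (Set.Ici (0:ℝ)), HasDerivAt f (f' y) y)
    (hint : IntervalIntegrable f' MeasureTheory.volume u v) :
    ((v - x) * (v * f v - u * f x) + (x - u) * (v * f x - u * f u)) / (v - u) ^ 2
        - (1 / (v - u)) * ∫ μ in u..v, f μ
      = ((∫ μ in x..v, ((v-u)*μ + v*(u-x)) * f' μ)
          + ∫ μ in u..x, ((v-u)*μ + u*(x-v)) * f' μ) / (v-u)^2 := by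
  have hx1 := hx.1
  have hx2 := hx.2
  have hIci : Set.Icc u v ⊆ interior (Set.Ici (0:ℝ)) := by
    rw [interior_Ici]
    intro μ hμ
    exact lt_of_lt_of_le hu hμ.1
  have hxv : Set.uIcc x v ⊆ Set.Icc u v := by
    rw [Set.uIcc_of_le hx2]
    exact Set.Icc_subset_Icc hx1 le_rfl
  have hux : Set.uIcc u x ⊆ Set.Icc u v := by
    rw [Set.uIcc_of_le hx1]
    exact Set.Icc_subset_Icc le_rfl hx2
  have hmemxv : Set.uIcc x v ⊆ Set.uIcc u v := by
    rw [Set.uIcc_of_le huv.le]; exact hxv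
  have hmemux : Set.uIcc u x ⊆ Set.uIcc u v := by
    rw [Set.uIcc_of_le huv.le]; exact hux
  have hfc : ContinuousOn f (Set.Icc u v) := fun μ hμ =>
    ((hderiv μ (hIci hμ)).continuousAt).continuousWithinAt
  have hfi1 : IntervalIntegrable f volume u x :=
    (hfc.mono hux).intervalIntegrable
  have hfi2 : IntervalIntegrable f volume x v :=
    (hfc.mono hxv).intervalIntegrable
  have e1 := ibp f f' (v-u) (v*(u-x)) x v (fun μ hμ => hderiv μ (hIci (hxv hμ)))
    (hint.mono_set hmemxv)
  have e2 := ibp f f' (v-u) (u*(x-v)) u x (fun μ hμ => hderiv μ (hIci (hux hμ)))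
    (hint.mono_set hmemux)
  have esplit : (∫ μ in u..x, f μ) + ∫ μ in x..v, f μ = ∫ μ in u..v, f μ :=
    intervalIntegral.integral_add_adjacent_intervals hfi1 hfi2
  rw [e1, e2, ← esplit]
  have hne : v - u ≠ 0 := by linarith
  field_simp
  ring

lemma subst1 (F : ℝ → ℝ) (a b : ℝ) (hab : a ≠ b) :
    ∫ μ in a..b, F μ = (b - a) * ∫ t in (0:ℝ)..1, F ((a-b)*t + b) := by
  have h := intervalIntegral.integral_comp_mul_add (a := (0:ℝ)) (b := 1) F
    (sub_ne_zero.2 hab) b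
  simp only [mul_zero, zero_add, mul_one, smul_eq_mul, sub_add_cancel] at h
  rw [h, intervalIntegral.integral_symm]
  have hne : a - b ≠ 0 := sub_ne_zero.2 hab
  field_simp
  ring

theorem stmt_11 (f f' : ℝ → ℝ) (u v q s : ℝ) (hu : 0 < u) (huv : u < v)
    (hq : 1 ≤ q) (hs0 : 0 < s) (hs1 : s ≤ 1)
    (hderiv : ∀ y ∈ interior (Set.Ici (0:ℝ)), HasDerivAt f (f' y) y)
    (hint : IntervalIntegrable f' MeasureTheory.volume u v)
    (hsconv : ∀ a ∈ Set.Icc u v, ∀ b ∈ Set.Icc u v, ∀ t ∈ Set.Icc (0:ℝ) 1,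
      |f' (t * a + (1 - t) * b)| ^ q ≤ t ^ s * |f' a| ^ q + (1 - t) ^ s * |f' b| ^ q)
    (x : ℝ) (hx : x ∈ Set.Icc u v) :
    |((v - x) * (v * f v - u * f x) + (x - u) * (v * f x - u * f u)) / (v - u) ^ 2
        - (1 / (v - u)) * ∫ μ in u..v, f μ|
      ≤ ((v - x) ^ 2 / (v - u) ^ 2) * ((u + v) / 2) ^ (1 - 1 / q) *
          (1 / ((s + 1) * (s + 2))) ^ (1 / q) *
          (((s + 1) * u + v) * |f' x| ^ q + ((s + 1) * v + u) * |f' v| ^ q) ^ (1 / q)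
        + ((x - u) ^ 2 / (v - u) ^ 2) * ((u + v) / 2) ^ (1 - 1 / q) *
          (1 / ((s + 1) * (s + 2))) ^ (1 / q) *
          (((s + 1) * v + u) * |f' x| ^ q + ((s + 1) * u + v) * |f' u| ^ q) ^ (1 / q) := by
  have hx1 := hx.1
  have hx2 := hx.2
  have hv : 0 < v := lt_trans hu huv
  have hvu : (0:ℝ) < v - u := by linarith
  have hA : (0:ℝ) ≤ |f' x| ^ q := Real.rpow_nonneg (abs_nonneg _) q
  have hB : (0:ℝ) ≤ |f' v| ^ q := Real.rpow_nonneg (abs_nonneg _) q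
  have hC : (0:ℝ) ≤ |f' u| ^ q := Real.rpow_nonneg (abs_nonneg _) q
  -- measurability of composed derivative
  have hmeas_aff : ∀ a b : ℝ, a ∈ Set.Icc u v → b ∈ Set.Icc u v →
      AEStronglyMeasurable (fun t => f' (t*a+(1-t)*b))
        (volume.restrict (Set.Ioc (0:ℝ) 1)) := by
    intro a b ha hb
    have haff : Measurable (fun t : ℝ => t*a+(1-t)*b) :=
      Continuous.measurable (by continuity)
    have base : AEStronglyMeasurable (fun t => deriv f (t*a+(1-t)*b))
        (volume.restrict (Set.Ioc (0:ℝ) 1)) :=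
      ((measurable_deriv f).comp haff).aestronglyMeasurable
    refine base.congr ?_
    refine (ae_restrict_mem measurableSet_Ioc).mono (fun t ht => ?_)
    have ht1 := ht.1.le
    have ht2 := ht.2
    have hpt : u ≤ t*a+(1-t)*b := by nlinarith [ha.1, ha.2, hb.1, hb.2]
    have hmem : t*a+(1-t)*b ∈ interior (Set.Ici (0:ℝ)) := by
      rw [interior_Ici]
      exact lt_of_lt_of_le hu hpt
    exact (hderiv _ hmem).deriv
  -- key bounds
  have bound1 : |∫ t in (0:ℝ)..1, (t*u+(1-t)*v) * f' (t*x+(1-t)*v)|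
      ≤ ((u+v)/2) ^ (1 - 1/q) * (1/((s+1)*(s+2))) ^ (1/q)
        * (((s+1)*u+v)*(|f' x| ^ q) + ((s+1)*v+u)*(|f' v| ^ q)) ^ (1/q) :=
    key _ u v q s _ _ hu hv hq hs0 hA hB (hmeas_aff x v hx ⟨huv.le, le_rfl⟩)
      (fun t ht => hsconv x hx v ⟨huv.le, le_rfl⟩ t ht)
      (intW u v) (intWH hs0 u v _ _)
  have bound2 : |∫ t in (0:ℝ)..1, (t*v+(1-t)*u) * f' (t*x+(1-t)*u)|
      ≤ ((v+u)/2) ^ (1 - 1/q) * (1/((s+1)*(s+2))) ^ (1/q)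
        * (((s+1)*v+u)*(|f' x| ^ q) + ((s+1)*u+v)*(|f' u| ^ q)) ^ (1/q) :=
    key _ v u q s _ _ hv hu hq hs0 hA hC (hmeas_aff x u hx ⟨le_rfl, huv.le⟩)
      (fun t ht => hsconv x hx u ⟨le_rfl, huv.le⟩ t ht)
      (intW v u) (intWH hs0 v u _ _)
  rw [show v + u = u + v from add_comm v u] at bound2
  -- substitution for the two pieces
  have I1eq : (∫ μ in x..v, ((v-u)*μ + v*(u-x)) * f' μ)
      = (v-x)^2 * ∫ t in (0:ℝ)..1, (t*u+(1-t)*v) * f' (t*x+(1-t)*v) := by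
    rcases eq_or_lt_of_le hx2 with h | h
    · subst h
      simp
    · rw [subst1 _ x v h.ne]
      have hcong : ∀ t ∈ Set.uIcc (0:ℝ) 1,
          ((v-u)*((x-v)*t+v) + v*(u-x)) * f' ((x-v)*t+v)
            = (v-x) * ((t*u+(1-t)*v) * f' (t*x+(1-t)*v)) := by
        intro t _
        have harg : (x-v)*t+v = t*x+(1-t)*v := by ring
        rw [harg]
        ring
      rw [intervalIntegral.integral_congr hcong, intervalIntegral.integral_const_mul]
      ring
  have I2eq : (∫ μ in u..x, ((v-u)*μ + u*(x-v)) * f' μ)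
      = (x-u)^2 * ∫ t in (0:ℝ)..1, (t*v+(1-t)*u) * f' (t*x+(1-t)*u) := by
    rcases eq_or_lt_of_le hx1 with h | h
    · rw [← h]
      simp
    · rw [intervalIntegral.integral_symm, subst1 _ x u h.ne']
      have hcong : ∀ t ∈ Set.uIcc (0:ℝ) 1,
          ((v-u)*((x-u)*t+u) + u*(x-v)) * f' ((x-u)*t+u)
            = (x-u) * ((t*v+(1-t)*u) * f' (t*x+(1-t)*u)) := by
        intro t _
        have harg : (x-u)*t+u = t*x+(1-t)*u := by ring
        rw [harg]
        ring
      rw [intervalIntegral.integral_congr hcong, intervalIntegral.integral_const_mul]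
      ring
  rw [identity f f' u v x hu huv hx hderiv hint, I1eq, I2eq]
  rw [abs_div, abs_of_nonneg (by positivity : (0:ℝ) ≤ (v-u)^2)]
  have habs : |(v-x)^2 * (∫ t in (0:ℝ)..1, (t*u+(1-t)*v) * f' (t*x+(1-t)*v))
        + (x-u)^2 * ∫ t in (0:ℝ)..1, (t*v+(1-t)*u) * f' (t*x+(1-t)*u)|
      ≤ (v-x)^2 * (((u+v)/2) ^ (1 - 1/q) * (1/((s+1)*(s+2))) ^ (1/q)
          * (((s+1)*u+v)*(|f' x| ^ q) + ((s+1)*v+u)*(|f' v| ^ q)) ^ (1/q))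
        + (x-u)^2 * (((u+v)/2) ^ (1 - 1/q) * (1/((s+1)*(s+2))) ^ (1/q)
          * (((s+1)*v+u)*(|f' x| ^ q) + ((s+1)*u+v)*(|f' u| ^ q)) ^ (1/q)) := by
    refine (abs_add_le _ _).trans ?_
    rw [abs_mul, abs_mul, abs_of_nonneg (by positivity : (0:ℝ) ≤ (v-x)^2),
      abs_of_nonneg (by positivity : (0:ℝ) ≤ (x-u)^2)]
    exact add_le_add (mul_le_mul_of_nonneg_left bound1 (by positivity))
      (mul_le_mul_of_nonneg_left bound2 (by positivity))
  have hdiv := (div_le_div_iff_of_pos_right (by positivity : (0:ℝ) < (v-u)^2)).2 habs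
  refine hdiv.trans_eq ?_
  field_simp
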